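/- arXiv:1301.1793 — 3 statements merged into one kernel-verified Lean document; each statement's English description precedes it below -/
import Mathlib

section
/- Let H be a complex Hilbert space and let (T_k)_{k∈ℕ} be a sequence of continuous linear operators on H converging in operator norm to a continuous linear operator T. Then ∑_{n=0}^∞ σ_n(T) ≤ liminf_{k→∞} ∑_{n=0}^∞ σ_n(T_k), where both sides are taken in [0,∞]. In particular, if liminf_{k→∞} ∑_{n=0}^∞ σ_n(T_k) < ∞, then T has finite trace norm. -/
open scoped ENNReal
/-- The `n`-th approximation number of a continuous linear operator `T` on a Hilbert space:
the infimum of `‖T - R‖` over continuous linear operators `R` whose range has dimension `≤ n`. -/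
noncomputable def approxNumber {H : Type*} [NormedAddCommGroup H] [InnerProductSpace ℂ H]
    (n : ℕ) (T : H →L[ℂ] H) : ℝ :=
  sInf {x : ℝ | ∃ R : H →L[ℂ] H,
    (FiniteDimensional ℂ (LinearMap.range (R : H →ₗ[ℂ] H)) ∧
      Module.finrank ℂ (LinearMap.range (R : H →ₗ[ℂ] H)) ≤ n) ∧ x = ‖T - R‖}

/-- The trace norm `‖T‖₁ = ∑_{n} σ_n(T)` of a continuous linear operator, a value in `[0,∞]`. -/
noncomputable def traceNorm {H : Type*} [NormedAddCommGroup H] [InnerProductSpace ℂ H]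
    (T : H →L[ℂ] H) : ℝ≥0∞ :=
  ∑' n, ENNReal.ofReal (approxNumber n T)

namespace Aux

variable {H : Type*} [NormedAddCommGroup H] [InnerProductSpace ℂ H]

def S (n : ℕ) (T : H →L[ℂ] H) : Set ℝ :=
  {x : ℝ | ∃ R : H →L[ℂ] H,
    (FiniteDimensional ℂ (LinearMap.range (R : H →ₗ[ℂ] H)) ∧
      Module.finrank ℂ (LinearMap.range (R : H →ₗ[ℂ] H)) ≤ n) ∧ x = ‖T - R‖}

lemma S_nonempty (n : ℕ) (T : H →L[ℂ] H) : (S n T).Nonempty := by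
  refine ⟨‖T - 0‖, 0, ⟨?_, ?_⟩, rfl⟩
  · have : LinearMap.range ((0 : H →L[ℂ] H) : H →ₗ[ℂ] H) = ⊥ := by
      simp [LinearMap.range_eq_bot]
    rw [this]
    infer_instance
  · have : LinearMap.range ((0 : H →L[ℂ] H) : H →ₗ[ℂ] H) = ⊥ := by
      simp [LinearMap.range_eq_bot]
    rw [this]
    simp

lemma S_bddBelow (n : ℕ) (T : H →L[ℂ] H) : BddBelow (S n T) :=
  ⟨0, fun x ⟨R, _, hx⟩ => hx ▸ norm_nonneg _⟩

lemma approxNumber_nonneg (n : ℕ) (T : H →L[ℂ] H) : 0 ≤ approxNumber n T :=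
  le_csInf (S_nonempty n T) fun x ⟨R, _, hx⟩ => hx ▸ norm_nonneg _

lemma approxNumber_le_add (n : ℕ) (A B : H →L[ℂ] H) :
    approxNumber n A ≤ approxNumber n B + ‖A - B‖ := by
  rw [← sub_le_iff_le_add]
  refine le_csInf (S_nonempty n B) fun x ⟨R, hR, hx⟩ => ?_
  rw [sub_le_iff_le_add, hx]
  have h1 : approxNumber n A ≤ ‖A - R‖ :=
    csInf_le (S_bddBelow n A) ⟨R, hR, rfl⟩
  have h2 : ‖A - R‖ ≤ ‖B - R‖ + ‖A - B‖ := by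
    have : A - R = (B - R) + (A - B) := by abel
    rw [this]; exact norm_add_le _ _
  linarith

end Aux


/-- If `(T k)` converges in operator norm to `T` on a complex Hilbert space, then
`∑_n σ_n(T) ≤ liminf_k ∑_n σ_n(T k)` in `[0,∞]`; in particular if the right-hand side is
finite, `T` has finite trace norm. -/
theorem traceNorm_le_liminf {H : Type*} [NormedAddCommGroup H]
    [InnerProductSpace ℂ H] [CompleteSpace H]
    (T : ℕ → H →L[ℂ] H) (Tlim : H →L[ℂ] H)
    (hconv : Filter.Tendsto (fun k => ‖T k - Tlim‖) Filter.atTop (nhds 0)) :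
    traceNorm Tlim ≤ Filter.atTop.liminf (fun k => traceNorm (T k)) ∧
      (Filter.atTop.liminf (fun k => traceNorm (T k)) < ⊤ → traceNorm Tlim < ⊤) := by
  have key : traceNorm Tlim ≤ Filter.atTop.liminf (fun k => traceNorm (T k)) := by
    rw [traceNorm, ENNReal.tsum_eq_iSup_sum]
    refine iSup_le fun s => ?_
    refine ENNReal.le_of_forall_pos_le_add fun ε hε _ => ?_
    set N : ℕ := s.card with hN
    set δ : ℝ := (ε : ℝ) / (N + 1) with hδdef
    have hδ : 0 < δ := div_pos (by exact_mod_cast hε) (by positivity)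
    have hev : ∀ᶠ k in Filter.atTop, ‖T k - Tlim‖ ≤ δ :=
      (hconv.eventually (gt_mem_nhds hδ)).mono fun k hk => le_of_lt hk
    have hstep : ∀ᶠ k in Filter.atTop,
        (∑ n ∈ s, ENNReal.ofReal (approxNumber n Tlim)) ≤
          traceNorm (T k) + N * ENNReal.ofReal δ := by
      filter_upwards [hev] with k hk
      calc ∑ n ∈ s, ENNReal.ofReal (approxNumber n Tlim)
          ≤ ∑ n ∈ s, (ENNReal.ofReal (approxNumber n (T k)) + ENNReal.ofReal δ) := by
            refine Finset.sum_le_sum fun n _ => ?_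
            calc ENNReal.ofReal (approxNumber n Tlim)
                ≤ ENNReal.ofReal (approxNumber n (T k) + ‖Tlim - T k‖) :=
                  ENNReal.ofReal_le_ofReal (Aux.approxNumber_le_add n Tlim (T k))
              _ ≤ ENNReal.ofReal (approxNumber n (T k)) + ENNReal.ofReal δ := by
                  refine le_trans ENNReal.ofReal_add_le ?_
                  exact add_le_add_right
                    (ENNReal.ofReal_le_ofReal (by rwa [norm_sub_rev] at hk)) _
        _ = (∑ n ∈ s, ENNReal.ofReal (approxNumber n (T k))) + N * ENNReal.ofReal δ := by
            rw [Finset.sum_add_distrib, Finset.sum_const, nsmul_eq_mul]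
        _ ≤ traceNorm (T k) + N * ENNReal.ofReal δ := by
            gcongr
            exact ENNReal.sum_le_tsum s
    have h1 : (∑ n ∈ s, ENNReal.ofReal (approxNumber n Tlim)) ≤
        Filter.atTop.liminf (fun k => traceNorm (T k) + N * ENNReal.ofReal δ) :=
      Filter.le_liminf_of_le (by isBoundedDefault) hstep
    rw [liminf_add_const Filter.atTop (fun k => traceNorm (T k))
      (N * ENNReal.ofReal δ) (Filter.isCoboundedUnder_ge_of_le _ fun k => le_top) (Filter.isBounded_ge_of_bot)] at h1
    refine h1.trans (add_le_add_right ?_ _)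
    have hmul : (N : ℝ) * δ ≤ (ε : ℝ) := by
      rw [hδdef, mul_div_assoc']
      rw [div_le_iff₀ (by positivity : (0:ℝ) < N + 1)]
      have hε' : (0:ℝ) ≤ ε := ε.coe_nonneg
      nlinarith
    calc (N : ℝ≥0∞) * ENNReal.ofReal δ
        = ENNReal.ofReal ((N : ℝ) * δ) := by
          rw [ENNReal.ofReal_mul (by positivity), ENNReal.ofReal_natCast]
      _ ≤ ENNReal.ofReal (ε : ℝ) := ENNReal.ofReal_le_ofReal hmul
      _ = (ε : ℝ≥0∞) := ENNReal.ofReal_coe_nnreal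
  exact ⟨key, fun h => lt_of_le_of_lt key h⟩
end

section
/- Let H be a complex vector space equipped with two norms ‖·‖ and ‖·‖', each induced by an inner product, and suppose there is a real number 0 < ε < 1 with (1−ε)‖x‖' ≤ ‖x‖ ≤ (1+ε)‖x‖' for all x ∈ H. Then for every linear operator T : H → H that is continuous for these norms and every n ∈ ℕ, one has ((1−ε)/(1+ε)) σ'_n(T) ≤ σ_n(T) ≤ ((1+ε)/(1−ε)) σ'_n(T), where σ_n (resp. σ'_n) denotes the n-th approximation number computed with the operator norm induced by ‖·‖ (resp. ‖·‖'). Consequently ((1−ε)/(1+ε)) ‖T‖₁' ≤ ‖T‖₁ ≤ ((1+ε)/(1−ε)) ‖T‖₁' for the corresponding trace norms. -/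
open scoped ENNReal

/-- The norm induced by an inner product (given as an `InnerProductSpace.Core`). -/
noncomputable def coreNorm {H : Type*} [AddCommGroup H] [Module ℂ H]
    (c : InnerProductSpace.Core ℂ H) (x : H) : ℝ :=
  Real.sqrt (c.inner x x).re

/-- A linear operator is bounded (continuous) with respect to a norm `N`. -/
def IsBoundedWrt {H : Type*} [AddCommGroup H] [Module ℂ H]
    (N : H → ℝ) (T : H →ₗ[ℂ] H) : Prop :=
  ∃ M : ℝ, ∀ x, N (T x) ≤ M * N x

/-- The operator norm of a linear operator with respect to a norm `N`. -/
noncomputable def opNormWrt {H : Type*} [AddCommGroup H] [Module ℂ H]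
    (N : H → ℝ) (T : H →ₗ[ℂ] H) : ℝ :=
  sInf {M : ℝ | 0 ≤ M ∧ ∀ x, N (T x) ≤ M * N x}

/-- The `n`-th approximation number of a linear operator with respect to a norm `N`:
the infimum of the `N`-operator norms `‖T - R‖_N` over bounded linear operators `R`
whose range has dimension `≤ n`. -/
noncomputable def approxNumWrt {H : Type*} [AddCommGroup H] [Module ℂ H]
    (N : H → ℝ) (n : ℕ) (T : H →ₗ[ℂ] H) : ℝ :=
  sInf {x : ℝ | ∃ R : H →ₗ[ℂ] H, IsBoundedWrt N R ∧
    (FiniteDimensional ℂ (LinearMap.range R) ∧ Module.finrank ℂ (LinearMap.range R) ≤ n) ∧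
    x = opNormWrt N (T - R)}

/-- The trace norm `‖T‖₁ = ∑_n σ_n(T)` with respect to a norm `N`, a value in `[0,∞]`. -/
noncomputable def traceNormWrt {H : Type*} [AddCommGroup H] [Module ℂ H]
    (N : H → ℝ) (T : H →ₗ[ℂ] H) : ℝ≥0∞ :=
  ∑' n, ENNReal.ofReal (approxNumWrt N n T)

section Aux

variable {H : Type*} [AddCommGroup H] [Module ℂ H]

lemma coreNorm_nonneg (c : InnerProductSpace.Core ℂ H) (x : H) : 0 ≤ coreNorm c x :=
  Real.sqrt_nonneg _

lemma coreNorm_zero (c : InnerProductSpace.Core ℂ H) : coreNorm c 0 = 0 := by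
  letI : NormedAddCommGroup H := @InnerProductSpace.Core.toNormedAddCommGroup ℂ H _ _ _ c
  have h : coreNorm c 0 = ‖(0 : H)‖ := rfl
  rw [h, norm_zero]

lemma coreNorm_sub_le (c : InnerProductSpace.Core ℂ H) (x y : H) :
    coreNorm c (x - y) ≤ coreNorm c x + coreNorm c y := by
  letI : NormedAddCommGroup H := @InnerProductSpace.Core.toNormedAddCommGroup ℂ H _ _ _ c
  have h : ∀ z : H, coreNorm c z = ‖z‖ := fun z => rfl
  rw [h, h, h]
  exact norm_sub_le x y

lemma opNormWrt_nonneg (N : H → ℝ) (T : H →ₗ[ℂ] H) : 0 ≤ opNormWrt N T :=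
  Real.sInf_nonneg fun _ hx => hx.1

lemma opNormWrt_bound (N : H → ℝ) (hN0 : ∀ x, 0 ≤ N x) (T : H →ₗ[ℂ] H)
    (hT : IsBoundedWrt N T) (x : H) : N (T x) ≤ opNormWrt N T * N x := by
  obtain ⟨M, hM⟩ := hT
  have hne : Set.Nonempty {M : ℝ | 0 ≤ M ∧ ∀ x, N (T x) ≤ M * N x} :=
    ⟨max M 0, le_max_right _ _, fun y =>
      (hM y).trans (mul_le_mul_of_nonneg_right (le_max_left _ _) (hN0 y))⟩
  rcases eq_or_lt_of_le (hN0 x) with h0 | h0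
  · obtain ⟨M', hM'0, hM'⟩ := hne
    have hx : N (T x) ≤ 0 := by
      have := hM' x
      rw [← h0, mul_zero] at this
      exact this
    exact hx.trans (mul_nonneg (opNormWrt_nonneg N T) (hN0 x))
  · rw [← div_le_iff₀ h0]
    refine le_csInf hne fun M' hM' => ?_
    rw [div_le_iff₀ h0]
    exact hM'.2 x

lemma isBoundedWrt_of_le {N N' : H → ℝ} (hN'0 : ∀ x, 0 ≤ N' x)
    (a b : ℝ) (ha : 0 < a) (hb : 0 < b)
    (h1 : ∀ x, a * N' x ≤ N x) (h2 : ∀ x, N x ≤ b * N' x) {T : H →ₗ[ℂ] H}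
    (hT : IsBoundedWrt N' T) : IsBoundedWrt N T := by
  obtain ⟨M, hM⟩ := hT
  refine ⟨b * max M 0 / a, fun x => ?_⟩
  have h3 : N' x ≤ N x / a := by rw [le_div_iff₀ ha]; nlinarith [h1 x]
  have h4 : N' (T x) ≤ max M 0 * N' x :=
    (hM x).trans (mul_le_mul_of_nonneg_right (le_max_left _ _) (hN'0 x))
  have h5 : N (T x) ≤ b * (max M 0 * N' x) :=
    (h2 _).trans (mul_le_mul_of_nonneg_left h4 hb.le)
  have h6 : max M 0 * N' x ≤ max M 0 * (N x / a) :=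
    mul_le_mul_of_nonneg_left h3 (le_max_right _ _)
  calc N (T x) ≤ b * (max M 0 * (N x / a)) := h5.trans (mul_le_mul_of_nonneg_left h6 hb.le)
    _ = b * max M 0 / a * N x := by field_simp

lemma isBoundedWrt_sub {N : H → ℝ} (hN0 : ∀ x, 0 ≤ N x)
    (htri : ∀ x y, N (x - y) ≤ N x + N y)
    {T R : H →ₗ[ℂ] H} (hT : IsBoundedWrt N T) (hR : IsBoundedWrt N R) :
    IsBoundedWrt N (T - R) := by
  obtain ⟨M1, h1⟩ := hT; obtain ⟨M2, h2⟩ := hR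
  refine ⟨max M1 0 + max M2 0, fun x => ?_⟩
  have e : (T - R) x = T x - R x := rfl
  rw [e]
  have a1 : N (T x) ≤ max M1 0 * N x :=
    (h1 x).trans (mul_le_mul_of_nonneg_right (le_max_left _ _) (hN0 x))
  have a2 : N (R x) ≤ max M2 0 * N x :=
    (h2 x).trans (mul_le_mul_of_nonneg_right (le_max_left _ _) (hN0 x))
  calc N (T x - R x) ≤ N (T x) + N (R x) := htri _ _
    _ ≤ (max M1 0 + max M2 0) * N x := by rw [add_mul]; exact add_le_add a1 a2

lemma opNormWrt_le_mul {N N' : H → ℝ} (hN'0 : ∀ x, 0 ≤ N' x)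
    (a b : ℝ) (ha : 0 < a) (hb : 0 < b)
    (h1 : ∀ x, a * N' x ≤ N x) (h2 : ∀ x, N x ≤ b * N' x) (T : H →ₗ[ℂ] H)
    (hT : IsBoundedWrt N' T) : opNormWrt N T ≤ b / a * opNormWrt N' T := by
  have hop := opNormWrt_bound N' hN'0 T hT
  have hopn := opNormWrt_nonneg N' T
  refine csInf_le ⟨0, fun M hM => hM.1⟩ ⟨by positivity, fun x => ?_⟩
  have h3 : N' x ≤ N x / a := by rw [le_div_iff₀ ha]; nlinarith [h1 x]
  calc N (T x) ≤ b * N' (T x) := h2 _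
    _ ≤ b * (opNormWrt N' T * N' x) := mul_le_mul_of_nonneg_left (hop x) hb.le
    _ ≤ b * (opNormWrt N' T * (N x / a)) :=
        mul_le_mul_of_nonneg_left (mul_le_mul_of_nonneg_left h3 hopn) hb.le
    _ = b / a * opNormWrt N' T * N x := by field_simp

lemma approxNumWrt_le_mul {N N' : H → ℝ} (hN0 : ∀ x, 0 ≤ N x) (hN'0 : ∀ x, 0 ≤ N' x)
    (hN'z : N' 0 = 0) (htri' : ∀ x y, N' (x - y) ≤ N' x + N' y)
    (a b : ℝ) (ha : 0 < a) (hb : 0 < b)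
    (h1 : ∀ x, a * N' x ≤ N x) (h2 : ∀ x, N x ≤ b * N' x)
    (n : ℕ) (T : H →ₗ[ℂ] H) (hT' : IsBoundedWrt N' T) :
    approxNumWrt N n T ≤ b / a * approxNumWrt N' n T := by
  have hc : (0 : ℝ) < b / a := by positivity
  set A : Set ℝ := {x : ℝ | ∃ R : H →ₗ[ℂ] H, IsBoundedWrt N R ∧
    (FiniteDimensional ℂ (LinearMap.range R) ∧ Module.finrank ℂ (LinearMap.range R) ≤ n) ∧
    x = opNormWrt N (T - R)} with hA
  set A' : Set ℝ := {x : ℝ | ∃ R : H →ₗ[ℂ] H, IsBoundedWrt N' R ∧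
    (FiniteDimensional ℂ (LinearMap.range R) ∧ Module.finrank ℂ (LinearMap.range R) ≤ n) ∧
    x = opNormWrt N' (T - R)} with hA'
  have hAbdd : BddBelow A := by
    refine ⟨0, fun z hz => ?_⟩
    obtain ⟨R, _, _, rfl⟩ := hz
    exact opNormWrt_nonneg N _
  have hzero_bdd : IsBoundedWrt N' (0 : H →ₗ[ℂ] H) := by
    refine ⟨0, fun x => ?_⟩
    simp only [LinearMap.zero_apply, hN'z, zero_mul, le_refl]
  have hzero_fin : FiniteDimensional ℂ (LinearMap.range (0 : H →ₗ[ℂ] H)) ∧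
      Module.finrank ℂ (LinearMap.range (0 : H →ₗ[ℂ] H)) ≤ n := by
    rw [LinearMap.range_zero]
    exact ⟨inferInstance, by simp⟩
  have hA'ne : A'.Nonempty := ⟨opNormWrt N' (T - 0), 0, hzero_bdd, hzero_fin, rfl⟩
  have key : ∀ y ∈ A', sInf A ≤ b / a * y := by
    rintro y ⟨R, hRb', hfin, rfl⟩
    have hRb : IsBoundedWrt N R := isBoundedWrt_of_le hN'0 a b ha hb h1 h2 hRb'
    have hmem : opNormWrt N (T - R) ∈ A := ⟨R, hRb, hfin, rfl⟩
    have hsub : IsBoundedWrt N' (T - R) := isBoundedWrt_sub hN'0 htri' hT' hRb'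
    exact (csInf_le hAbdd hmem).trans (opNormWrt_le_mul hN'0 a b ha hb h1 h2 (T - R) hsub)
  have step : sInf A / (b / a) ≤ sInf A' := by
    refine le_csInf hA'ne fun y hy => ?_
    rw [div_le_iff₀ hc]
    rw [mul_comm]
    exact key y hy
  have := (div_le_iff₀ hc).1 step
  rw [mul_comm] at this
  exact this

lemma approxNumWrt_nonneg (N : H → ℝ) (n : ℕ) (T : H →ₗ[ℂ] H) :
    0 ≤ approxNumWrt N n T := by
  refine Real.sInf_nonneg fun x hx => ?_
  obtain ⟨R, _, _, rfl⟩ := hx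
  exact opNormWrt_nonneg N _

end Aux

/-- If two inner-product norms `N, N'` on a complex vector space satisfy
`(1-ε)‖x‖' ≤ ‖x‖ ≤ (1+ε)‖x‖'` with `0 < ε < 1`, then for every bounded linear operator `T`
and every `n`, `((1-ε)/(1+ε)) σ'_n(T) ≤ σ_n(T) ≤ ((1+ε)/(1-ε)) σ'_n(T)`, and consequently
`((1-ε)/(1+ε)) ‖T‖₁' ≤ ‖T‖₁ ≤ ((1+ε)/(1-ε)) ‖T‖₁'`. -/
theorem approxNumWrt_equiv {H : Type*} [AddCommGroup H] [Module ℂ H]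
    (c c' : InnerProductSpace.Core ℂ H) (N N' : H → ℝ)
    (hN : ∀ x, N x = coreNorm c x) (hN' : ∀ x, N' x = coreNorm c' x)
    (ε : ℝ) (hε0 : 0 < ε) (hε1 : ε < 1)
    (hlow : ∀ x, (1 - ε) * N' x ≤ N x) (hup : ∀ x, N x ≤ (1 + ε) * N' x)
    (T : H →ₗ[ℂ] H) (hT : IsBoundedWrt N T) (hT' : IsBoundedWrt N' T) :
    (∀ n : ℕ, (1 - ε) / (1 + ε) * approxNumWrt N' n T ≤ approxNumWrt N n T ∧
      approxNumWrt N n T ≤ (1 + ε) / (1 - ε) * approxNumWrt N' n T) ∧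
    (ENNReal.ofReal ((1 - ε) / (1 + ε)) * traceNormWrt N' T ≤ traceNormWrt N T ∧
      traceNormWrt N T ≤ ENNReal.ofReal ((1 + ε) / (1 - ε)) * traceNormWrt N' T) := by
  have h1 : (0 : ℝ) < 1 - ε := by linarith
  have h2 : (0 : ℝ) < 1 + ε := by linarith
  have hN0 : ∀ x, 0 ≤ N x := fun x => by rw [hN]; exact coreNorm_nonneg c x
  have hN'0 : ∀ x, 0 ≤ N' x := fun x => by rw [hN']; exact coreNorm_nonneg c' x
  have hNz : N 0 = 0 := by rw [hN]; exact coreNorm_zero c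
  have hN'z : N' 0 = 0 := by rw [hN']; exact coreNorm_zero c'
  have htri : ∀ x y, N (x - y) ≤ N x + N y := fun x y => by
    rw [hN, hN, hN]; exact coreNorm_sub_le c x y
  have htri' : ∀ x y, N' (x - y) ≤ N' x + N' y := fun x y => by
    rw [hN', hN', hN']; exact coreNorm_sub_le c' x y
  have hlow' : ∀ x, (1 / (1 + ε)) * N x ≤ N' x := fun x => by
    rw [div_mul_eq_mul_div, one_mul, div_le_iff₀ h2]
    nlinarith [hup x]
  have upper : ∀ n, approxNumWrt N n T ≤ (1 + ε) / (1 - ε) * approxNumWrt N' n T := by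
    intro n
    exact approxNumWrt_le_mul hN0 hN'0 hN'z htri' (1 - ε) (1 + ε) h1 h2 hlow hup n T hT'
  have hswap_low : ∀ x, (1 / (1 + ε)) * N x ≤ N' x := hlow'
  have hswap_up : ∀ x, N' x ≤ (1 / (1 - ε)) * N x := fun x => by
    rw [div_mul_eq_mul_div, one_mul, le_div_iff₀ h1]
    nlinarith [hlow x]
  have sigma'_le : ∀ n, approxNumWrt N' n T ≤ (1 + ε) / (1 - ε) * approxNumWrt N n T := by
    intro n
    have := approxNumWrt_le_mul hN'0 hN0 hNz htri (1 / (1 + ε)) (1 / (1 - ε))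
      (by positivity) (by positivity) hswap_low hswap_up n T hT
    have e : (1 / (1 - ε)) / (1 / (1 + ε)) = (1 + ε) / (1 - ε) := by
      field_simp
    rwa [e] at this
  have perN : ∀ n : ℕ, (1 - ε) / (1 + ε) * approxNumWrt N' n T ≤ approxNumWrt N n T ∧
      approxNumWrt N n T ≤ (1 + ε) / (1 - ε) * approxNumWrt N' n T := by
    intro n
    refine ⟨?_, upper n⟩
    have hσ := sigma'_le n
    have h3 : (0 : ℝ) ≤ (1 - ε) / (1 + ε) := by positivity
    have h4 := mul_le_mul_of_nonneg_left hσ h3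
    have e : (1 - ε) / (1 + ε) * ((1 + ε) / (1 - ε) * approxNumWrt N n T)
        = approxNumWrt N n T := by
      field_simp
    linarith [e ▸ h4]
  refine ⟨perN, ?_, ?_⟩
  · rw [traceNormWrt, traceNormWrt, ← ENNReal.tsum_mul_left]
    refine ENNReal.tsum_le_tsum fun n => ?_
    rw [← ENNReal.ofReal_mul (by positivity)]
    exact ENNReal.ofReal_le_ofReal (perN n).1
  · rw [traceNormWrt, traceNormWrt, ← ENNReal.tsum_mul_left]
    refine ENNReal.tsum_le_tsum fun n => ?_
    rw [← ENNReal.ofReal_mul (by positivity)]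
    exact ENNReal.ofReal_le_ofReal (perN n).2
end

section
/- Let H be a complex Hilbert space, (φ_j)_{j∈ℕ} a Hilbert basis of H, and (λ_j)_{j∈ℕ} nonnegative real numbers. Let D := {x ∈ H : ∑_{j=0}^∞ λ_j² |⟨x, φ_j⟩|² < ∞}, and define Q : D → H by Q(x) = ∑_{j=0}^∞ λ_j ⟨x, φ_j⟩ φ_j. Suppose S is a linear subspace of H with D ⊆ S and T : S → H is a linear map such that ⟨T x, y⟩ = ⟨x, T y⟩ for all x, y ∈ S and T x = Q x for all x ∈ D. Then S = D (and hence T = Q): the operator Q is a maximal symmetric extension of itself. -/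
/-- Let `φ` be a Hilbert basis of a complex Hilbert space `H`, `lam j ≥ 0`,
`D = {x | ∑_j (lam j)² |⟨φ j, x⟩|² < ∞}` and `Q x = ∑_j lam j ⟨φ j, x⟩ φ j` on `D`.
If `S` is a linear subspace with `D ⊆ S` and `T : S → H` is linear, symmetric
(`⟨T x, y⟩ = ⟨x, T y⟩` for `x, y ∈ S`) and agrees with `Q` on `D`, then `S = D`:
`Q` is a maximal symmetric extension of itself. -/
theorem maximal_symmetric_extension {H : Type*} [NormedAddCommGroup H]
    [InnerProductSpace ℂ H] [CompleteSpace H]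
    (φ : ℕ → H) (hortho : Orthonormal ℂ φ)
    (hcomplete : (Submodule.span ℂ (Set.range φ)).topologicalClosure = ⊤)
    (lam : ℕ → ℝ) (hlam : ∀ j, 0 ≤ lam j)
    (D : Set H) (hD : D = {x : H | Summable (fun j => lam j ^ 2 * ‖(inner ℂ (φ j) x : ℂ)‖ ^ 2)})
    (S : Submodule ℂ H) (hDS : D ⊆ (S : Set H))
    (T : S →ₗ[ℂ] H)
    (hsym : ∀ x y : S, (inner ℂ (T x) (y : H) : ℂ) = inner ℂ (x : H) (T y))
    (hTQ : ∀ x : S, (x : H) ∈ D →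
      T x = ∑' j, ((lam j : ℂ) * (inner ℂ (φ j) (x : H) : ℂ)) • φ j) :
    (S : Set H) = D := by
  apply Set.Subset.antisymm _ hDS
  intro x hxS
  -- each basis vector is in D
  have hφD : ∀ j, φ j ∈ D := by
    intro j
    rw [hD]
    apply summable_of_finite_support
    apply Set.Finite.subset (Set.finite_singleton j)
    intro i hi
    simp only [Function.mem_support] at hi
    by_contra hij
    apply hi
    rw [orthonormal_iff_ite.mp hortho i j]
    simp only [Set.mem_singleton_iff] at hij
    simp [hij]
  -- T on basis vectors
  have hTφ : ∀ j, T ⟨φ j, hDS (hφD j)⟩ = (lam j : ℂ) • φ j := by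
    intro j
    rw [hTQ _ (hφD j)]
    rw [tsum_eq_single j]
    · rw [orthonormal_iff_ite.mp hortho j j]
      simp
    · intro i hij
      rw [orthonormal_iff_ite.mp hortho i j]
      simp [hij]
  set xs : S := ⟨x, hxS⟩
  -- Fourier coefficients of T xs
  have hcoef : ∀ j, (inner ℂ (φ j) (T xs) : ℂ) = (lam j : ℂ) * inner ℂ (φ j) x := by
    intro j
    have := hsym ⟨φ j, hDS (hφD j)⟩ xs
    rw [hTφ j] at this
    rw [inner_smul_left] at this
    simp only [Complex.conj_ofReal] at this
    exact this.symm
  rw [hD]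
  have hb : Summable fun j => ‖(inner ℂ (φ j) (T xs) : ℂ)‖ ^ 2 :=
    hortho.inner_products_summable (T xs)
  refine hb.congr fun j => ?_
  rw [hcoef j, norm_mul, mul_pow]
  simp [abs_of_nonneg (hlam j)]
end
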